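/- Fix α > 2. Then g_α(s) ≥ 0 for every s ∈ [0,1], the function s ↦ √(g_α(s)) is strictly concave on [0,1], and consequently, for every a ∈ ℝ and b > 0, the function s ↦ a·s + b·√(g_α(s)) is strictly concave on [0,1]. -/

import Mathlib

open Real

noncomputable section

/-- `c_α = 1 / tan(π/α)`. -/
def calpha (α : ℝ) : ℝ := 1 / Real.tan (π / α)

/-- `r_α(s) = √(c_α² + 1 - s²) - c_α`. -/
def ralpha (α s : ℝ) : ℝ := Real.sqrt (calpha α ^ 2 + 1 - s ^ 2) - calpha α

/-- `g_α(s) = -1 - s² + (2α/π) r_α(s) + (2αs/π) arctan(s / (r_α(s) + c_α))`. -/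
def galpha (α s : ℝ) : ℝ :=
  -1 - s ^ 2 + (2 * α / π) * ralpha α s
    + (2 * α * s / π) * Real.arctan (s / (ralpha α s + calpha α))

/-- First derivative of `g_α`. -/
def G1 (α s : ℝ) : ℝ :=
  -2 * s + (2 * α / π) * Real.arctan (s / Real.sqrt (calpha α ^ 2 + 1 - s ^ 2))

/-- Second derivative of `g_α`. -/
def G2 (α s : ℝ) : ℝ := -2 + (2 * α / π) / Real.sqrt (calpha α ^ 2 + 1 - s ^ 2)

/-- Third derivative of `g_α`. -/
def G3 (α s : ℝ) : ℝ := (2 * α / π) * s / (Real.sqrt (calpha α ^ 2 + 1 - s ^ 2)) ^ 3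

/-- `D = (g')² - 2 g g''`. -/
def Dfun (α s : ℝ) : ℝ := (G1 α s) ^ 2 - 2 * galpha α s * G2 α s

lemma pia_mem (α : ℝ) (hα : 2 < α) : 0 < π / α ∧ π / α < π / 2 := by
  have hπ := Real.pi_pos
  constructor
  · positivity
  · rw [div_lt_div_iff₀ (by linarith) (by norm_num)]
    nlinarith

lemma calpha_pos (α : ℝ) (hα : 2 < α) : 0 < calpha α := by
  obtain ⟨h1, h2⟩ := pia_mem α hα
  have := Real.tan_pos_of_pos_of_lt_pi_div_two h1 h2
  unfold calpha
  positivity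

lemma arctan_inv_calpha (α : ℝ) (hα : 2 < α) :
    Real.arctan (1 / calpha α) = π / α := by
  obtain ⟨h1, h2⟩ := pia_mem α hα
  rw [show (1 : ℝ) / calpha α = Real.tan (π / α) by rw [calpha, one_div_one_div],
    Real.arctan_tan (by linarith) h2]

lemma U_pos (α : ℝ) (hα : 2 < α) {s : ℝ} (hs : s ^ 2 ≤ 1) :
    0 < calpha α ^ 2 + 1 - s ^ 2 := by
  have := calpha_pos α hα
  nlinarith

lemma U_pos_of_Icc (α : ℝ) (hα : 2 < α) {s : ℝ} (hs : s ∈ Set.Icc (0:ℝ) 1) :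
    0 < calpha α ^ 2 + 1 - s ^ 2 :=
  U_pos α hα (by nlinarith [hs.1, hs.2])

lemma hasDerivAt_U (c : ℝ) (s : ℝ) :
    HasDerivAt (fun x : ℝ => c ^ 2 + 1 - x ^ 2) (-(2 * s)) s := by
  simpa using ((hasDerivAt_pow 2 s).const_sub (c ^ 2 + 1))

lemma hasDerivAt_R {α s : ℝ} (hU : 0 < calpha α ^ 2 + 1 - s ^ 2) :
    HasDerivAt (fun x : ℝ => Real.sqrt (calpha α ^ 2 + 1 - x ^ 2))
      (-(2 * s) / (2 * Real.sqrt (calpha α ^ 2 + 1 - s ^ 2))) s :=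
  (hasDerivAt_U (calpha α) s).sqrt hU.ne'

lemma hasDerivAt_atan {α s : ℝ} (hU : 0 < calpha α ^ 2 + 1 - s ^ 2) :
    HasDerivAt (fun x : ℝ => Real.arctan (x / Real.sqrt (calpha α ^ 2 + 1 - x ^ 2)))
      (1 / Real.sqrt (calpha α ^ 2 + 1 - s ^ 2)) s := by
  set R := Real.sqrt (calpha α ^ 2 + 1 - s ^ 2) with hRdef
  have hRpos : 0 < R := Real.sqrt_pos.2 hU
  have hR2 : R ^ 2 = calpha α ^ 2 + 1 - s ^ 2 := Real.sq_sqrt hU.le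
  have hq : HasDerivAt (fun x : ℝ => x / Real.sqrt (calpha α ^ 2 + 1 - x ^ 2))
      ((1 * R - s * (-(2 * s) / (2 * R))) / R ^ 2) s :=
    (hasDerivAt_id s).div (hasDerivAt_R hU) hRpos.ne'
  have h := hq.arctan
  convert h using 1
  have hden : 0 < 1 + (s / R) ^ 2 := by positivity
  have hcc : calpha α ^ 2 + 1 = R ^ 2 + s ^ 2 := by rw [hR2]; ring
  field_simp
  rw [hcc]
  ring_nf
  rw [Real.sqrt_sq hRpos.le]
  ring

lemma hasDerivAt_galpha {α s : ℝ} (hα : 2 < α) (hU : 0 < calpha α ^ 2 + 1 - s ^ 2) :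
    HasDerivAt (galpha α) (G1 α s) s := by
  have hπ := Real.pi_pos
  set R := Real.sqrt (calpha α ^ 2 + 1 - s ^ 2) with hRdef
  have hRpos : 0 < R := Real.sqrt_pos.2 hU
  have hgeq : galpha α = fun x : ℝ =>
      -1 - x ^ 2 + (2 * α / π) * (Real.sqrt (calpha α ^ 2 + 1 - x ^ 2) - calpha α)
        + (2 * α * x / π) * Real.arctan (x / Real.sqrt (calpha α ^ 2 + 1 - x ^ 2)) := by
    funext x
    simp [galpha, ralpha, sub_add_cancel]
  rw [hgeq]
  have h1 : HasDerivAt (fun x : ℝ => -1 - x ^ 2) (-(2 * s)) s := by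
    simpa using ((hasDerivAt_pow 2 s).const_sub (-1 : ℝ))
  have h2 : HasDerivAt (fun x : ℝ =>
      (2 * α / π) * (Real.sqrt (calpha α ^ 2 + 1 - x ^ 2) - calpha α))
      ((2 * α / π) * (-(2 * s) / (2 * R))) s :=
    (((hasDerivAt_R hU)).sub_const (calpha α)).const_mul _
  have h3 : HasDerivAt (fun x : ℝ =>
      (2 * α * x / π) * Real.arctan (x / Real.sqrt (calpha α ^ 2 + 1 - x ^ 2)))
      ((2 * α / π) * Real.arctan (s / R) + (2 * α * s / π) * (1 / R)) s := by
    have ha : HasDerivAt (fun x : ℝ => 2 * α * x / π) (2 * α / π) s := by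
      simpa using ((hasDerivAt_id s).const_mul (2 * α)).div_const π
    have := ha.mul (hasDerivAt_atan hU)
    exact this
  have := (h1.add h2).add h3
  refine this.congr_deriv ?_
  unfold G1
  rw [← hRdef]
  field_simp
  ring

lemma hasDerivAt_G1 {α s : ℝ} (hU : 0 < calpha α ^ 2 + 1 - s ^ 2) :
    HasDerivAt (G1 α) (G2 α s) s := by
  set R := Real.sqrt (calpha α ^ 2 + 1 - s ^ 2) with hRdef
  have h1 : HasDerivAt (fun x : ℝ => -2 * x) (-2 : ℝ) s := by
    simpa using (hasDerivAt_id s).const_mul (-2 : ℝ)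
  have h2 := (hasDerivAt_atan hU).const_mul (2 * α / π)
  have := h1.add h2
  unfold G1 G2
  refine this.congr_deriv ?_
  rw [← hRdef]
  ring

lemma hasDerivAt_G2 {α s : ℝ} (hU : 0 < calpha α ^ 2 + 1 - s ^ 2) :
    HasDerivAt (G2 α) (G3 α s) s := by
  set R := Real.sqrt (calpha α ^ 2 + 1 - s ^ 2) with hRdef
  have hRpos : 0 < R := Real.sqrt_pos.2 hU
  have h := (((hasDerivAt_R hU).inv hRpos.ne').const_mul (2 * α / π)).const_add (-2 : ℝ)
  have hG2eq : G2 α = fun x : ℝ =>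
      -2 + (2 * α / π) * (Real.sqrt (calpha α ^ 2 + 1 - x ^ 2))⁻¹ := by
    funext x
    rw [G2, div_eq_mul_inv]
  rw [hG2eq]
  refine h.congr_deriv ?_
  rw [G3, ← hRdef]
  field_simp

lemma hasDerivAt_D {α s : ℝ} (hα : 2 < α) (hU : 0 < calpha α ^ 2 + 1 - s ^ 2) :
    HasDerivAt (Dfun α) (-2 * galpha α s * G3 α s) s := by
  have h1 := (hasDerivAt_G1 hU).pow 2
  have h2 := ((hasDerivAt_galpha hα hU).const_mul 2).mul (hasDerivAt_G2 hU)
  have h := h1.sub h2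
  have hDeq : Dfun α = fun x : ℝ => (G1 α x) ^ 2 - 2 * galpha α x * G2 α x := rfl
  rw [hDeq]
  refine h.congr_deriv ?_
  push_cast
  ring

lemma sqrt_one_sub_one {α : ℝ} (hα : 2 < α) :
    Real.sqrt (calpha α ^ 2 + 1 - (1:ℝ) ^ 2) = calpha α := by
  rw [show calpha α ^ 2 + 1 - (1:ℝ) ^ 2 = calpha α ^ 2 by ring,
    Real.sqrt_sq (calpha_pos α hα).le]

lemma galpha_one {α : ℝ} (hα : 2 < α) : galpha α 1 = 0 := by
  have hπ := Real.pi_pos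
  have hc := calpha_pos α hα
  have hr : ralpha α 1 = 0 := by
    rw [ralpha, sqrt_one_sub_one hα, sub_self]
  rw [galpha, hr]
  rw [show (0:ℝ) + calpha α = calpha α by ring]
  rw [arctan_inv_calpha α hα]
  field_simp
  ring

lemma G1_zero {α : ℝ} : G1 α 0 = 0 := by simp [G1]

lemma G1_one {α : ℝ} (hα : 2 < α) : G1 α 1 = 0 := by
  have hπ := Real.pi_pos
  rw [G1, sqrt_one_sub_one hα, arctan_inv_calpha α hα]
  field_simp
  ring

lemma G3_pos {α s : ℝ} (hα : 2 < α) (hs : 0 < s) (hU : 0 < calpha α ^ 2 + 1 - s ^ 2) :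
    0 < G3 α s := by
  have hπ := Real.pi_pos
  have hRpos : 0 < Real.sqrt (calpha α ^ 2 + 1 - s ^ 2) := Real.sqrt_pos.2 hU
  have hA : 0 < 2 * α / π := by positivity
  unfold G3
  positivity

lemma contOn_galpha {α : ℝ} (hα : 2 < α) : ContinuousOn (galpha α) (Set.Icc 0 1) :=
  fun s hs =>
    ((hasDerivAt_galpha hα (U_pos_of_Icc α hα hs)).differentiableAt.continuousAt).continuousWithinAt

lemma contOn_G1 {α : ℝ} (hα : 2 < α) : ContinuousOn (G1 α) (Set.Icc 0 1) :=
  fun s hs =>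
    ((hasDerivAt_G1 (U_pos_of_Icc α hα hs)).differentiableAt.continuousAt).continuousWithinAt

lemma contOn_D {α : ℝ} (hα : 2 < α) : ContinuousOn (Dfun α) (Set.Icc 0 1) :=
  fun s hs =>
    ((hasDerivAt_D hα (U_pos_of_Icc α hα hs)).differentiableAt.continuousAt).continuousWithinAt

lemma isOpen_V (α : ℝ) : IsOpen {y : ℝ | 0 < calpha α ^ 2 + 1 - y ^ 2} :=
  isOpen_lt continuous_const (by continuity)

lemma strictConvexOn_G1 {α : ℝ} (hα : 2 < α) :
    StrictConvexOn ℝ (Set.Icc (0:ℝ) 1) (G1 α) := by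
  apply strictConvexOn_of_deriv2_pos (convex_Icc 0 1) (contOn_G1 hα)
  intro x hx
  rw [interior_Icc] at hx
  have hU : 0 < calpha α ^ 2 + 1 - x ^ 2 := U_pos α hα (by nlinarith [hx.1, hx.2])
  have hev : deriv (G1 α) =ᶠ[nhds x] G2 α := by
    filter_upwards [(isOpen_V α).mem_nhds hU] with y hy
    exact (hasDerivAt_G1 hy).deriv
  have h2 : deriv^[2] (G1 α) x = deriv (deriv (G1 α)) x := rfl
  rw [h2, hev.deriv_eq, (hasDerivAt_G2 hU).deriv]
  exact G3_pos hα hx.1 hU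

lemma G1_neg {α : ℝ} (hα : 2 < α) {s : ℝ} (hs : s ∈ Set.Ioo (0:ℝ) 1) :
    G1 α s < 0 := by
  obtain ⟨hs0, hs1⟩ := hs
  have h := (strictConvexOn_G1 hα).2 (Set.left_mem_Icc.2 zero_le_one)
    (Set.right_mem_Icc.2 zero_le_one) (by norm_num : (0:ℝ) ≠ 1)
    (show (0:ℝ) < 1 - s by linarith) hs0 (by ring : (1 - s) + s = 1)
  simp only [smul_eq_mul, mul_zero, mul_one, zero_add, G1_zero, G1_one hα] at h
  linarith

lemma galpha_anti {α : ℝ} (hα : 2 < α) : StrictAntiOn (galpha α) (Set.Icc 0 1) := by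
  apply strictAntiOn_of_deriv_neg (convex_Icc 0 1) (contOn_galpha hα)
  intro x hx
  rw [interior_Icc] at hx
  have hU : 0 < calpha α ^ 2 + 1 - x ^ 2 := U_pos α hα (by nlinarith [hx.1, hx.2])
  rw [(hasDerivAt_galpha hα hU).deriv]
  exact G1_neg hα hx

lemma galpha_pos {α : ℝ} (hα : 2 < α) {s : ℝ} (hs : s ∈ Set.Ico (0:ℝ) 1) :
    0 < galpha α s := by
  have h := galpha_anti hα (Set.mem_Icc.2 ⟨hs.1, hs.2.le⟩)
    (Set.right_mem_Icc.2 zero_le_one) hs.2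
  rw [galpha_one hα] at h
  exact h

lemma galpha_nonneg {α : ℝ} (hα : 2 < α) {s : ℝ} (hs : s ∈ Set.Icc (0:ℝ) 1) :
    0 ≤ galpha α s := by
  rcases eq_or_lt_of_le hs.2 with h | h
  · rw [h, galpha_one hα]
  · exact (galpha_pos hα ⟨hs.1, h⟩).le

lemma Dfun_one {α : ℝ} (hα : 2 < α) : Dfun α 1 = 0 := by
  rw [Dfun, G1_one hα, galpha_one hα]
  ring

lemma Dfun_pos {α : ℝ} (hα : 2 < α) {s : ℝ} (hs : s ∈ Set.Ioo (0:ℝ) 1) :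
    0 < Dfun α s := by
  have hanti : StrictAntiOn (Dfun α) (Set.Icc 0 1) := by
    apply strictAntiOn_of_deriv_neg (convex_Icc 0 1) (contOn_D hα)
    intro x hx
    rw [interior_Icc] at hx
    have hU : 0 < calpha α ^ 2 + 1 - x ^ 2 := U_pos α hα (by nlinarith [hx.1, hx.2])
    rw [(hasDerivAt_D hα hU).deriv]
    have hg := galpha_pos hα ⟨hx.1.le, hx.2⟩
    have hG3 := G3_pos hα hx.1 hU
    nlinarith
  have h := hanti (Set.mem_Icc.2 ⟨hs.1.le, hs.2.le⟩) (Set.right_mem_Icc.2 zero_le_one) hs.2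
  rwa [Dfun_one hα] at h

lemma strictConcaveOn_sqrt_galpha {α : ℝ} (hα : 2 < α) :
    StrictConcaveOn ℝ (Set.Icc (0:ℝ) 1) (fun s => Real.sqrt (galpha α s)) := by
  have hcont : ContinuousOn (fun s => Real.sqrt (galpha α s)) (Set.Icc (0:ℝ) 1) :=
    Real.continuous_sqrt.comp_continuousOn (contOn_galpha hα)
  apply strictConcaveOn_of_deriv2_neg (convex_Icc 0 1) hcont
  intro x hx
  rw [interior_Icc] at hx
  have hU : 0 < calpha α ^ 2 + 1 - x ^ 2 := U_pos α hα (by nlinarith [hx.1, hx.2])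
  have hgx : 0 < galpha α x := galpha_pos hα ⟨hx.1.le, hx.2⟩
  have hev : deriv (fun s => Real.sqrt (galpha α s)) =ᶠ[nhds x]
      fun y => G1 α y / (2 * Real.sqrt (galpha α y)) := by
    filter_upwards [isOpen_Ioo.mem_nhds hx] with y hy
    have hUy : 0 < calpha α ^ 2 + 1 - y ^ 2 := U_pos α hα (by nlinarith [hy.1, hy.2])
    have hgy : 0 < galpha α y := galpha_pos hα ⟨hy.1.le, hy.2⟩
    exact ((hasDerivAt_galpha hα hUy).sqrt hgy.ne').deriv
  have h2 : deriv^[2] (fun s => Real.sqrt (galpha α s)) x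
      = deriv (deriv (fun s => Real.sqrt (galpha α s))) x := rfl
  rw [h2, hev.deriv_eq]
  set q := Real.sqrt (galpha α x) with hqdef
  have hqpos : 0 < q := Real.sqrt_pos.2 hgx
  have hqs : q ^ 2 = galpha α x := Real.sq_sqrt hgx.le
  have hd := (hasDerivAt_G1 hU).div
    (((hasDerivAt_galpha hα hU).sqrt hgx.ne').const_mul 2) (by positivity)
  rw [show (fun y => G1 α y / (2 * Real.sqrt (galpha α y))) = (G1 α / fun y => 2 * Real.sqrt (galpha α y)) from rfl, hd.deriv]
  apply div_neg_of_neg_of_pos _ (by positivity)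
  have hDpos : 0 < Dfun α x := Dfun_pos hα hx
  have hexp : G2 α x * (2 * q) - G1 α x * (2 * (G1 α x / (2 * q)))
      = -(Dfun α x) / q := by
    rw [Dfun, ← hqs]
    field_simp
    ring
  rw [hexp]
  exact div_neg_of_neg_of_pos (by linarith) hqpos

/-- **Lemma.** For `α > 2`: `g_α ≥ 0` on `[0,1]`, `s ↦ √(g_α(s))` is strictly concave on
`[0,1]`, and so is `s ↦ a s + b √(g_α(s))` for any `a ∈ ℝ`, `b > 0`. -/
theorem stmt13 (α : ℝ) (hα : 2 < α) :
    (∀ s ∈ Set.Icc (0 : ℝ) 1, 0 ≤ galpha α s) ∧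
    StrictConcaveOn ℝ (Set.Icc (0 : ℝ) 1) (fun s => Real.sqrt (galpha α s)) ∧
    (∀ a b : ℝ, 0 < b →
      StrictConcaveOn ℝ (Set.Icc (0 : ℝ) 1)
        (fun s => a * s + b * Real.sqrt (galpha α s))) := by
  refine ⟨fun s hs => galpha_nonneg hα hs, strictConcaveOn_sqrt_galpha hα, ?_⟩
  intro a b hb
  have hsqrt := strictConcaveOn_sqrt_galpha hα
  have hlin : ConcaveOn ℝ (Set.Icc (0:ℝ) 1) (fun s : ℝ => a * s) :=
    ⟨convex_Icc _ _, fun x _ y _ p q hp hq hpq => by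
      simp only [smul_eq_mul]
      exact le_of_eq (by ring)⟩
  have hbs : StrictConcaveOn ℝ (Set.Icc (0:ℝ) 1)
      (fun s : ℝ => b * Real.sqrt (galpha α s)) := by
    refine ⟨convex_Icc _ _, fun x hx y hy hxy p q hp hq hpq => ?_⟩
    have h := hsqrt.2 hx hy hxy hp hq hpq
    simp only [smul_eq_mul] at h ⊢
    calc p * (b * Real.sqrt (galpha α x)) + q * (b * Real.sqrt (galpha α y))
        = b * (p * Real.sqrt (galpha α x) + q * Real.sqrt (galpha α y)) := by ring
      _ < b * Real.sqrt (galpha α (p * x + q * y)) := by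
          exact mul_lt_mul_of_pos_left h hb
  have heq : (fun s : ℝ => a * s + b * Real.sqrt (galpha α s))
      = fun s : ℝ => b * Real.sqrt (galpha α s) + a * s := funext fun s => by ring
  rw [heq]
  exact hbs.add_concaveOn hlin
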